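/- Let s ∈ (0,1], f: ℝⁿ → ℝᵐ measurable, and suppose that for all x outside a countable set N₀, ap-limsup_{y→x} |f(y)-f(x)|/|y-x|^s < ∞. Then for every set A ⊆ ℝⁿ with H^{sm}(A) = 0, one has Lᵐ(f(A)) = 0. -/

import Mathlib

open MeasureTheory Metric Filter Set
open scoped ENNReal NNReal Topology

noncomputable section

/-- `ℝⁿ` as a Euclidean space. -/
abbrev Ec (n : ℕ) := EuclideanSpace ℝ (Fin n)

/-- The set `A` has vanishing Lebesgue density at `x`. -/
def apSmall {n : ℕ} (x : Ec n) (A : Set (Ec n)) : Prop :=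
  Tendsto (fun r : ℝ => volume (A ∩ ball x r) / volume (ball x r))
    (nhdsWithin 0 (Ioi 0)) (nhds 0)

/-- `f` is approximately differentiable of order `k` at `x`, with Taylor polynomial
`y ↦ ∑_{j ≤ k} (p j) (y-x)^j = p.partialSum (k+1) (y-x)` (here the coefficient maps `p j`
already incorporate the factor `1/j!`): the approximate limit of
`|f y - p_k(x;y)|/|y-x|^k` as `y → x` is `0`. -/
def IsApproxTaylor {n m : ℕ} (f : Ec n → Ec m) (k : ℕ) (x : Ec n)
    (p : FormalMultilinearSeries ℝ (Ec n) (Ec m)) : Prop :=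
  ∀ ε > (0 : ℝ),
    apSmall x {y | y ≠ x ∧ ε * ‖y - x‖ ^ k ≤ ‖f y - p.partialSum (k + 1) (y - x)‖}


/-- Null sets for `μH[m]` on `ℝᵐ` are Lebesgue-null. -/
lemma ec_vol_zero {m : ℕ} {S : Set (Ec m)} (h : μH[(m:ℝ)] S = 0) : volume S = 0 := by
  set e := (MeasurableEquiv.toLp 2 (Fin m → ℝ)).symm
  have hmap : (volume : Measure (Ec m)).map e = volume :=
    (EuclideanSpace.volume_preserving_symm_measurableEquiv_toLp (Fin m)).map_eq
  have h1 : volume S = (volume : Measure (Fin m → ℝ)) (e '' S) := by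
    rw [← hmap, MeasurableEquiv.map_apply]
    rw [Set.preimage_image_eq S e.injective]
  have h2 : (volume : Measure (Fin m → ℝ)) (e '' S) = μH[(m:ℝ)] (e '' S) := by
    have := (hausdorffMeasure_pi_real (ι := Fin m)).symm
    simp only [Fintype.card_fin] at this
    rw [this]
  have hlip : LipschitzWith 1 (⇑e) := PiLp.lipschitzWith_ofLp 2 (fun _ : Fin m => ℝ)
  have h3 : μH[(m:ℝ)] (e '' S) ≤ (1:ℝ≥0∞) ^ (m:ℝ) * μH[(m:ℝ)] S :=
    hlip.hausdorffMeasure_image_le (by positivity) S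
  rw [h1, h2]
  simpa [h] using h3

/-- if `s ∈ (0,1]` and `ap-limsup_{y→x} |f(y)-f(x)|/|y-x|^s < ∞` outside a
countable set `N₀`, then `f` maps sets of `H^{sm}`-measure zero to sets of Lebesgue
measure zero in `ℝᵐ`. -/
theorem image_null_of_hausdorff_null {n m : ℕ} (s : ℝ) (hs0 : 0 < s) (hs1 : s ≤ 1)
    (f : Ec n → Ec m) (hf : Measurable f)
    (N₀ : Set (Ec n)) (hN₀ : N₀.Countable)
    (h : ∀ x ∉ N₀, ∃ lam : ℝ,
      apSmall x {y | y ≠ x ∧ lam * Real.rpow ‖y - x‖ s ≤ ‖f y - f x‖}) :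
    ∀ A : Set (Ec n), μH[s * m] A = 0 → volume (f '' A) = 0 := by
  intro A hA
  rcases Nat.eq_zero_or_pos m with hm0 | hm
  · -- `m = 0`: then `μH[0] A = 0` forces `A = ∅`.
    subst hm0
    have hA0 : A = ∅ := by
      by_contra hne
      rw [← Ne, ← nonempty_iff_ne_empty] at hne
      have h1 := Measure.one_le_hausdorffMeasure_zero_of_nonempty (X := Ec n) hne
      rw [show s * ((0:ℕ):ℝ) = 0 by simp] at hA
      rw [hA] at h1
      simp at h1
    simp [hA0]
  have hmR : (0:ℝ) < m := by exact_mod_cast hm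
  -- the "bad" sets
  set Bad : ℝ → Ec n → Set (Ec n) :=
    fun lam x => {y | y ≠ x ∧ lam * Real.rpow ‖y - x‖ s ≤ ‖f y - f x‖} with hBadDef
  set ε₀ : ℝ≥0∞ := (2:ℝ≥0∞)⁻¹ ^ (n+2) with hε₀Def
  have hε₀0 : 0 < ε₀ := by
    rw [hε₀Def, pos_iff_ne_zero]
    exact pow_ne_zero _ (ENNReal.inv_ne_zero.2 (by simp))
  -- good sets
  set G : ℕ → ℕ → Set (Ec n) := fun k j =>
    {x | ∀ t : ℝ, 0 < t → t ≤ 1/((j:ℝ)+1) →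
      volume (Bad k x ∩ ball x t) ≤ ε₀ * volume (ball x t)} with hGDef
  set c : ℕ → Ec n := TopologicalSpace.denseSeq (Ec n) with hcDef
  set P : ℕ → ℕ → ℕ → Set (Ec n) := fun k j i =>
    G k j ∩ ball (c i) (1/(4*((j:ℝ)+1))) with hPDef
  -- key Hölder estimate on good sets
  have key : ∀ (k j : ℕ) (x z : Ec n), x ∈ G k j → z ∈ G k j →
      dist x z < 1/(2*((j:ℝ)+1)) → ‖f x - f z‖ ≤ 3 * k * dist x z ^ s := by
    intro k j x z hx hz hdist
    rcases eq_or_ne x z with rfl | hne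
    · simp only [sub_self, norm_zero]
      positivity
    set t := dist x z with htDef
    have ht0 : 0 < t := dist_pos.2 hne
    have hj1 : (0:ℝ) < (j:ℝ)+1 := by positivity
    have h2t : 0 < 2*t := by linarith
    have h2tle : 2*t ≤ 1/((j:ℝ)+1) := by
      have he : (2:ℝ) * (1/(2*((j:ℝ)+1))) = 1/((j:ℝ)+1) := by field_simp
      nlinarith [hdist]
    have hb1 := hx (2*t) h2t h2tle
    have hb2 := hz (2*t) h2t h2tle
    -- volume computations
    have hcen : volume (ball z (2*t)) = volume (ball x (2*t)) := by
      rw [Measure.addHaar_ball_center volume z, Measure.addHaar_ball_center volume x]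
    have hdouble : volume (ball x (2*t)) = (2:ℝ≥0∞)^n * volume (ball x t) := by
      rw [Measure.addHaar_ball_mul_of_pos volume x two_pos t]
      rw [← Measure.addHaar_ball_center volume x t]
      congr 1
      rw [finrank_euclideanSpace_fin]
      rw [← ENNReal.ofReal_ofNat, ← ENNReal.ofReal_pow (by norm_num)]
    have hv0 : volume (ball x t) ≠ 0 := (measure_ball_pos volume x ht0).ne'
    have hvt : volume (ball x t) ≠ ⊤ := measure_ball_lt_top.ne
    have hE : ε₀ * (2:ℝ≥0∞)^n = 2⁻¹ * 2⁻¹ := by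
      have h1 : ε₀ = (2:ℝ≥0∞)⁻¹^n * (2⁻¹ * 2⁻¹) := by
        rw [hε₀Def, pow_add]; ring
      have hc : (2:ℝ≥0∞)⁻¹^n * 2^n = 1 := by
        rw [← mul_pow, ENNReal.inv_mul_cancel (by simp) (by simp), one_pow]
      calc ε₀ * (2:ℝ≥0∞)^n = (2⁻¹*2⁻¹) * ((2:ℝ≥0∞)⁻¹^n * 2^n) := by rw [h1]; ring
        _ = 2⁻¹ * 2⁻¹ := by rw [hc, mul_one]
    -- there is a point avoiding both bad sets
    have hsub : ¬ (ball x t ⊆ Bad ↑k x ∪ Bad ↑k z) := by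
      intro hss
      have hmono : volume (ball x t) ≤
          volume (Bad ↑k x ∩ ball x (2*t)) + volume (Bad ↑k z ∩ ball z (2*t)) := by
        refine le_trans (measure_mono ?_) (measure_union_le _ _)
        intro y hy
        have hyx : dist y x < t := mem_ball.1 hy
        rcases hss hy with hmem | hmem
        · exact Or.inl ⟨hmem, mem_ball.2 (by linarith)⟩
        · refine Or.inr ⟨hmem, mem_ball.2 ?_⟩
          calc dist y z ≤ dist y x + dist x z := dist_triangle _ _ _
            _ < 2*t := by rw [← htDef]; linarith
      have hhalf : volume (Bad ↑k x ∩ ball x (2*t)) + volume (Bad ↑k z ∩ ball z (2*t)) ≤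
          2⁻¹ * volume (ball x t) := by
        calc volume (Bad ↑k x ∩ ball x (2*t)) + volume (Bad ↑k z ∩ ball z (2*t))
            ≤ ε₀ * volume (ball x (2*t)) + ε₀ * volume (ball z (2*t)) := add_le_add hb1 hb2
          _ = (2⁻¹*2⁻¹) * volume (ball x t) + (2⁻¹*2⁻¹) * volume (ball x t) := by
              rw [hcen, hdouble, ← mul_assoc, hE]
          _ = (2⁻¹*2⁻¹ + 2⁻¹*2⁻¹) * volume (ball x t) := by rw [add_mul]
          _ = 2⁻¹ * volume (ball x t) := by
              congr 1
              rw [← two_mul, ← mul_assoc, ENNReal.mul_inv_cancel (by simp) (by simp), one_mul]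
      have hlt : 2⁻¹ * volume (ball x t) < volume (ball x t) := by
        rw [← ENNReal.div_eq_inv_mul]
        exact ENNReal.half_lt_self hv0 hvt
      exact absurd (le_trans hmono hhalf) (not_le.2 hlt)
    obtain ⟨y, hyball, hybad⟩ := not_subset.1 hsub
    have hyx : dist y x < t := mem_ball.1 hyball
    have hyz : dist y z < 2*t := by
      calc dist y z ≤ dist y x + dist x z := dist_triangle _ _ _
        _ < 2*t := by rw [← htDef]; linarith
    rw [mem_union, not_or] at hybad
    obtain ⟨hbx, hbz⟩ := hybad
    have hkR : (0:ℝ) ≤ (k:ℝ) := Nat.cast_nonneg k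
    have est : ∀ w : Ec n, y ∉ Bad ↑k w → ‖f y - f w‖ ≤ (k:ℝ) * ‖y - w‖ ^ s := by
      intro w hw
      rcases eq_or_ne y w with rfl | hyw
      · simp only [sub_self, norm_zero]
        positivity
      · rw [hBadDef, mem_setOf_eq, not_and] at hw
        have := hw hyw
        rw [not_le] at this
        exact this.le
    have e1 : ‖f y - f x‖ ≤ (k:ℝ) * ‖y - x‖ ^ s := est x hbx
    have e2 : ‖f y - f z‖ ≤ (k:ℝ) * ‖y - z‖ ^ s := est z hbz
    have hnx : ‖y - x‖ ^ s ≤ t ^ s := by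
      apply Real.rpow_le_rpow (norm_nonneg _) _ hs0.le
      rw [← dist_eq_norm]; exact hyx.le
    have hnz : ‖y - z‖ ^ s ≤ (2*t) ^ s := by
      apply Real.rpow_le_rpow (norm_nonneg _) _ hs0.le
      rw [← dist_eq_norm]; exact hyz.le
    have h2s : (2:ℝ) ^ s ≤ 2 := by
      calc (2:ℝ) ^ s ≤ (2:ℝ) ^ (1:ℝ) := Real.rpow_le_rpow_of_exponent_le one_le_two hs1
        _ = 2 := Real.rpow_one 2
    have h2ts : (2*t) ^ s = 2 ^ s * t ^ s := Real.mul_rpow (by norm_num) ht0.le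
    have hts0 : (0:ℝ) ≤ t ^ s := Real.rpow_nonneg ht0.le s
    have htri : ‖f x - f z‖ ≤ ‖f y - f x‖ + ‖f y - f z‖ := by
      have hre : f x - f z = (f y - f z) - (f y - f x) := by abel
      rw [hre]
      calc ‖(f y - f z) - (f y - f x)‖ ≤ ‖f y - f z‖ + ‖f y - f x‖ := norm_sub_le _ _
        _ = ‖f y - f x‖ + ‖f y - f z‖ := add_comm _ _
    calc ‖f x - f z‖ ≤ ‖f y - f x‖ + ‖f y - f z‖ := htri
      _ ≤ (k:ℝ) * ‖y - x‖ ^ s + (k:ℝ) * ‖y - z‖ ^ s := add_le_add e1 e2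
      _ ≤ (k:ℝ) * t ^ s + (k:ℝ) * (2 ^ s * t ^ s) := by
          refine add_le_add (mul_le_mul_of_nonneg_left hnx hkR) ?_
          rw [← h2ts]; exact mul_le_mul_of_nonneg_left hnz hkR
      _ ≤ 3 * k * t ^ s := by nlinarith [mul_nonneg hkR hts0]
  -- coverage
  have cover : ∀ x, x ∉ N₀ → ∃ k j i, x ∈ P k j i := by
    intro x hx
    obtain ⟨lam, hlam⟩ := h x hx
    refine ⟨⌈lam⌉₊ + 1, ?_⟩
    set k := ⌈lam⌉₊ + 1 with hkDef
    have hklam : lam ≤ (k:ℝ) := by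
      calc lam ≤ (⌈lam⌉₊ : ℝ) := Nat.le_ceil lam
        _ ≤ (k:ℝ) := by rw [hkDef]; push_cast; linarith
    have hev : ∀ᶠ t in 𝓝[>] (0:ℝ),
        volume ({y | y ≠ x ∧ lam * Real.rpow ‖y - x‖ s ≤ ‖f y - f x‖} ∩ ball x t)
          / volume (ball x t) < ε₀ :=
      hlam.eventually (gt_mem_nhds hε₀0)
    rw [eventually_nhdsWithin_iff, Metric.eventually_nhds_iff] at hev
    obtain ⟨δ, δpos, hδ⟩ := hev
    obtain ⟨j, hj⟩ := exists_nat_one_div_lt δpos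
    refine ⟨j, ?_⟩
    have hxG : x ∈ G k j := by
      intro t ht0 htle
      have hratio := hδ (show dist t 0 < δ by
          rw [Real.dist_eq, sub_zero, abs_of_pos ht0]
          calc t ≤ 1/((j:ℝ)+1) := htle
            _ < δ := by exact_mod_cast hj) ht0
      have hb0 : volume (ball x t) ≠ 0 := (measure_ball_pos volume x ht0).ne'
      have hbt : volume (ball x t) ≠ ⊤ := measure_ball_lt_top.ne
      have hlamball :
          volume ({y | y ≠ x ∧ lam * Real.rpow ‖y - x‖ s ≤ ‖f y - f x‖} ∩ ball x t)
            ≤ ε₀ * volume (ball x t) :=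
        (ENNReal.div_le_iff hb0 hbt).1 hratio.le
      refine le_trans (measure_mono ?_) hlamball
      refine inter_subset_inter_left _ ?_
      intro y hy
      obtain ⟨hy1, hy2⟩ := hy
      refine ⟨hy1, le_trans ?_ hy2⟩
      apply mul_le_mul_of_nonneg_right hklam
      exact Real.rpow_nonneg (norm_nonneg _) s
    obtain ⟨i, hi⟩ := (TopologicalSpace.denseRange_denseSeq (Ec n)).exists_dist_lt x
      (show (0:ℝ) < 1/(4*((j:ℝ)+1)) by positivity)
    exact ⟨i, hxG, mem_ball.2 hi⟩
  -- Hölder on pieces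
  have holder : ∀ k j i : ℕ, HolderOnWith (3 * k : ℝ≥0) s.toNNReal f (A ∩ P k j i) := by
    intro k j i x hx z hz
    have hj1 : (0:ℝ) < (j:ℝ)+1 := by positivity
    have hdxz : dist x z < 1/(2*((j:ℝ)+1)) := by
      have h1 : dist x (c i) < 1/(4*((j:ℝ)+1)) := mem_ball.1 hx.2.2
      have h2 : dist z (c i) < 1/(4*((j:ℝ)+1)) := mem_ball.1 hz.2.2
      have he : 1/(4*((j:ℝ)+1)) + 1/(4*((j:ℝ)+1)) = 1/(2*((j:ℝ)+1)) := by field_simp; ring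
      calc dist x z ≤ dist x (c i) + dist (c i) z := dist_triangle _ _ _
        _ = dist x (c i) + dist z (c i) := by rw [dist_comm (c i) z]
        _ < 1/(2*((j:ℝ)+1)) := by linarith
    have hk := key k j x z hx.2.1 hz.2.1 hdxz
    rw [edist_dist, edist_dist]
    have hC : ((3 * k : ℝ≥0) : ℝ) = 3 * (k:ℝ) := by push_cast; ring
    calc ENNReal.ofReal (dist (f x) (f z)) ≤ ENNReal.ofReal (3 * (k:ℝ) * dist x z ^ s) := by
          apply ENNReal.ofReal_le_ofReal
          rw [dist_eq_norm]; exact hk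
      _ = ↑(3 * k : ℝ≥0) * ENNReal.ofReal (dist x z) ^ ((s.toNNReal : ℝ)) := by
          rw [ENNReal.ofReal_mul (by positivity), Real.coe_toNNReal _ hs0.le,
            ENNReal.ofReal_rpow_of_nonneg dist_nonneg hs0.le, ← hC,
            ENNReal.ofReal_coe_nnreal]
  -- assembling
  have hcover : f '' A ⊆ f '' (A ∩ N₀) ∪ ⋃ k, ⋃ j, ⋃ i, f '' (A ∩ P k j i) := by
    rintro _ ⟨x, hxA, rfl⟩
    by_cases hx : x ∈ N₀
    · exact Or.inl ⟨x, ⟨hxA, hx⟩, rfl⟩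
    · obtain ⟨k, j, i, hp⟩ := cover x hx
      exact Or.inr (mem_iUnion.2 ⟨k, mem_iUnion.2 ⟨j, mem_iUnion.2 ⟨i, ⟨x, ⟨hxA, hp⟩, rfl⟩⟩⟩⟩)
  have hN : volume (f '' (A ∩ N₀)) = 0 := by
    apply ec_vol_zero
    haveI := Measure.noAtoms_hausdorff (Ec m) hmR
    exact (((hN₀.mono inter_subset_right).image f)).measure_zero _
  have hP0 : ∀ k j i : ℕ, volume (f '' (A ∩ P k j i)) = 0 := by
    intro k j i
    apply ec_vol_zero
    have h1 := (holder k j i).hausdorffMeasure_image_le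
      (show 0 < s.toNNReal from Real.toNNReal_pos.2 hs0) (show (0:ℝ) ≤ (m:ℝ) by positivity)
    have h2 : μH[((s.toNNReal : ℝ)) * (m:ℝ)] (A ∩ P k j i) = 0 := by
      rw [Real.coe_toNNReal _ hs0.le]
      exact measure_mono_null inter_subset_left hA
    rw [h2, mul_zero] at h1
    exact le_antisymm h1 (zero_le)
  apply measure_mono_null hcover
  apply measure_union_null hN
  exact measure_iUnion_null fun k => measure_iUnion_null fun j => measure_iUnion_null fun i =>
    hP0 k j i


end
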